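/- For every real ε with 0 < ε ≤ 1/4 and all natural numbers n, k with 1 ≤ k ≤ n/2, the number of strings x : Fin n → Bool whose Hamming distance to their cyclic shift by k is strictly less than ε·n is at most 2^k · 2^(H₂(2ε)·(n − k)). -/

import Mathlib

open Finset

/-- The binary entropy function `H₂(p) = p·log₂(1/p) + (1−p)·log₂(1/(1−p))`. -/
noncomputable def binEntropy (p : ℝ) : ℝ :=
  p * Real.logb 2 (1 / p) + (1 - p) * Real.logb 2 (1 / (1 - p))

lemma key_term_le (p : ℝ) (hp : 0 < p) (hp2 : p ≤ 1 / 2) (m j : ℕ)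
    (hj : (j : ℝ) ≤ p * m) (hjm : j ≤ m) :
    (2 : ℝ) ^ (-(binEntropy p * m)) ≤ p ^ j * (1 - p) ^ (m - j) := by
  set q : ℝ := 1 - p with hq_def
  have hq : 0 < q := by simp [hq_def]; linarith
  have hpq : p / q ≤ 1 := by
    rw [div_le_one hq]; linarith
  have hpq0 : 0 < p / q := div_pos hp hq
  -- rewrite RHS as q^m * (p/q)^(j:ℝ) using rpow
  have hRHS : p ^ j * q ^ (m - j) = q ^ (m : ℝ) * (p / q) ^ (j : ℝ) := by
    rw [Real.rpow_natCast, Real.rpow_natCast, div_pow, ← Nat.sub_add_cancel hjm,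
      pow_add]
    field_simp
    rw [Nat.add_sub_cancel]
  rw [hRHS]
  have step1 : q ^ (m : ℝ) * (p / q) ^ (p * m) ≤ q ^ (m : ℝ) * (p / q) ^ (j : ℝ) := by
    apply mul_le_mul_of_nonneg_left _ (Real.rpow_nonneg hq.le _)
    exact Real.rpow_le_rpow_of_exponent_ge hpq0 hpq hj
  refine le_trans (le_of_eq ?_) step1
  -- 2 ^ (-(H p * m)) = q ^ m * (p/q) ^ (p m)
  have h2 : (0:ℝ) < 2 := two_pos
  calc (2:ℝ) ^ (-(binEntropy p * m))
      = (2:ℝ) ^ (Real.logb 2 q * m + Real.logb 2 (p / q) * (p * m)) := by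
        congr 1
        rw [Real.logb_div hp.ne' hq.ne']
        simp only [binEntropy, one_div, Real.logb_inv, ← hq_def]
        ring
    _ = (2:ℝ) ^ (Real.logb 2 q * m) * (2:ℝ) ^ (Real.logb 2 (p / q) * (p * m)) :=
        Real.rpow_add h2 _ _
    _ = q ^ (m : ℝ) * (p / q) ^ (p * m) := by
        rw [Real.rpow_mul (by norm_num : (0:ℝ) ≤ 2), Real.rpow_mul (by norm_num : (0:ℝ) ≤ 2),
          Real.rpow_logb h2 (by norm_num) hq, Real.rpow_logb h2 (by norm_num) hpq0]

lemma count_small_subsets (p : ℝ) (hp : 0 < p) (hp2 : p ≤ 1 / 2) (m : ℕ) :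
    (((univ : Finset (Finset (Fin m))).filter
        (fun t => (t.card : ℝ) ≤ p * m)).card : ℝ) ≤ 2 ^ (binEntropy p * m) := by
  set q : ℝ := 1 - p with hq_def
  have hq : 0 < q := by simp [hq_def]; linarith
  have hsum : ∑ t ∈ (univ : Finset (Fin m)).powerset, p ^ t.card * q ^ (m - t.card) = 1 := by
    have h := Finset.prod_add (fun _ : Fin m => p) (fun _ : Fin m => q) univ
    simp only [Finset.prod_const, Finset.card_univ, Fintype.card_fin] at h
    have : p + q = 1 := by simp [hq_def]
    rw [this, one_pow] at h
    rw [h]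
    apply Finset.sum_congr rfl
    intro t ht
    rw [Finset.card_sdiff_of_subset (Finset.subset_univ t), Finset.card_univ, Fintype.card_fin]
  set S := (univ : Finset (Finset (Fin m))).filter (fun t => (t.card : ℝ) ≤ p * m) with hS
  have hle : (S.card : ℝ) * (2:ℝ) ^ (-(binEntropy p * m)) ≤ 1 := by
    calc (S.card : ℝ) * (2:ℝ) ^ (-(binEntropy p * m))
        = ∑ _t ∈ S, (2:ℝ) ^ (-(binEntropy p * m)) := by
          rw [Finset.sum_const, nsmul_eq_mul]
      _ ≤ ∑ t ∈ S, p ^ t.card * q ^ (m - t.card) := by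
          apply Finset.sum_le_sum
          intro t ht
          simp only [hS, Finset.mem_filter] at ht
          exact key_term_le p hp hp2 m t.card ht.2 (Finset.card_le_card (Finset.subset_univ t)
            |>.trans_eq (by simp))
      _ ≤ ∑ t ∈ (univ : Finset (Fin m)).powerset, p ^ t.card * q ^ (m - t.card) := by
          apply Finset.sum_le_sum_of_subset_of_nonneg
          · intro t ht; simp [Finset.mem_powerset]
          · intro t _ _
            positivity
      _ = 1 := hsum
  calc (S.card : ℝ) = (S.card : ℝ) * ((2:ℝ) ^ (-(binEntropy p * m)) * (2:ℝ) ^ (binEntropy p * m)) := by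
        rw [← Real.rpow_add two_pos]; simp
      _ = ((S.card : ℝ) * (2:ℝ) ^ (-(binEntropy p * m))) * (2:ℝ) ^ (binEntropy p * m) := by ring
      _ ≤ 1 * (2:ℝ) ^ (binEntropy p * m) := by
          exact mul_le_mul_of_nonneg_right hle (Real.rpow_nonneg (by norm_num) _)
      _ = 2 ^ (binEntropy p * m) := one_mul _

/-- For `0 < ε ≤ 1/4` and `1 ≤ k ≤ n/2`, the number of strings `x : Fin n → Bool`
whose Hamming distance to their cyclic shift by `k` is less than `ε·n` is at most
`2^k · 2^(H₂(2ε)·(n−k))`. -/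
theorem card_strings_close_to_shift_le (ε : ℝ) (hε : 0 < ε) (hε' : ε ≤ 1 / 4)
    (n k : ℕ) (hk : 1 ≤ k) (hkn : k ≤ n / 2) :
    (Nat.card {x : Fin n → Bool //
        (hammingDist x (fun i => x ⟨((i : ℕ) + k) % n, Nat.mod_lt _ i.pos⟩) : ℝ) < ε * n} : ℝ)
      ≤ 2 ^ k * 2 ^ (binEntropy (2 * ε) * ((n : ℝ) - k)) := by
  classical
  have h2k : k * 2 ≤ n := (Nat.le_div_iff_mul_le (by norm_num)).mp hkn
  have hkn' : k ≤ n := by omega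
  set m := n - k with hm
  have hmn : (m : ℝ) = (n : ℝ) - k := by
    rw [hm, Nat.cast_sub hkn']
  have hb1 : ∀ j : Fin m, (j : ℕ) < n := fun j => lt_of_lt_of_le j.2 (Nat.sub_le n k)
  have hb2 : ∀ j : Fin m, (j : ℕ) + k < n := fun j => by
    have := j.2; omega
  set P : Finset (Fin m) → Prop := fun t => (t.card : ℝ) ≤ (2 * ε) * m with hP
  set f : {x : Fin n → Bool //
        (hammingDist x (fun i => x ⟨((i : ℕ) + k) % n, Nat.mod_lt _ i.pos⟩) : ℝ) < ε * n} →
      (Fin k → Bool) × {t : Finset (Fin m) // P t} :=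
    fun x => ⟨fun j => x.1 ⟨j.1, lt_of_lt_of_le j.2 hkn'⟩,
      ⟨univ.filter (fun j : Fin m => x.1 ⟨j.1, hb1 j⟩ ≠ x.1 ⟨j.1 + k, hb2 j⟩), by
        have hsub : (univ.filter
            (fun j : Fin m => x.1 ⟨j.1, hb1 j⟩ ≠ x.1 ⟨j.1 + k, hb2 j⟩)).card
            ≤ hammingDist x.1 (fun i => x.1 ⟨((i : ℕ) + k) % n, Nat.mod_lt _ i.pos⟩) := by
          rw [hammingDist]
          apply Finset.card_le_card_of_injOn (fun j => (⟨j.1, hb1 j⟩ : Fin n))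
          · intro j hj
            simp only [Finset.mem_filter, Finset.mem_univ, true_and] at hj ⊢
            have hmod : ((j : ℕ) + k) % n = (j : ℕ) + k := Nat.mod_eq_of_lt (hb2 j)
            convert hj using 2
            simp [Fin.ext_iff, hmod]
          · intro a _ b _ hab
            have := congrArg Fin.val hab
            simp only at this
            exact Fin.ext this
        have hεn : ε * n ≤ 2 * ε * m := by
          have hk2 : (k : ℝ) * 2 ≤ n := by exact_mod_cast h2k
          have hnm : (n : ℝ) ≤ 2 * m := by rw [hmn]; linarith
          nlinarith
        refine le_of_lt ?_
        calc ((univ.filter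
            (fun j : Fin m => x.1 ⟨j.1, hb1 j⟩ ≠ x.1 ⟨j.1 + k, hb2 j⟩)).card : ℝ)
            ≤ (hammingDist x.1 (fun i => x.1 ⟨((i : ℕ) + k) % n, Nat.mod_lt _ i.pos⟩) : ℝ) := by
              exact_mod_cast hsub
          _ < ε * n := x.2
          _ ≤ 2 * ε * m := hεn⟩⟩
  have hinj : Function.Injective f := by
    intro x y hxy
    have h1 : (fun j : Fin k => x.1 ⟨j.1, lt_of_lt_of_le j.2 hkn'⟩)
        = fun j : Fin k => y.1 ⟨j.1, lt_of_lt_of_le j.2 hkn'⟩ := congrArg Prod.fst hxy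
    have h2 : (univ.filter (fun j : Fin m => x.1 ⟨j.1, hb1 j⟩ ≠ x.1 ⟨j.1 + k, hb2 j⟩))
        = (univ.filter (fun j : Fin m => y.1 ⟨j.1, hb1 j⟩ ≠ y.1 ⟨j.1 + k, hb2 j⟩)) :=
      congrArg (fun z => z.2.1) hxy
    have btaut : ∀ a b c d : Bool, ((a ≠ b) ↔ (c ≠ d)) → a = c → b = d := by decide
    have key : ∀ i : ℕ, ∀ hi : i < n, x.1 ⟨i, hi⟩ = y.1 ⟨i, hi⟩ := by
      intro i
      induction i using Nat.strong_induction_on with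
      | _ i ih =>
        intro hi
        by_cases hik : i < k
        · exact congrFun h1 ⟨i, hik⟩
        · have hj : i - k < m := by omega
          set j : Fin m := ⟨i - k, hj⟩ with hjdef
          have hmem := Finset.ext_iff.mp h2 j
          simp only [Finset.mem_filter, Finset.mem_univ, true_and] at hmem
          have hprev : x.1 ⟨(j : ℕ), hb1 j⟩ = y.1 ⟨(j : ℕ), hb1 j⟩ := ih (i - k) (by omega) _
          have hfin : (⟨(j : ℕ) + k, hb2 j⟩ : Fin n) = ⟨i, hi⟩ := Fin.ext (by simp [hjdef]; omega)
          have := btaut _ _ _ _ hmem hprev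
          rw [hfin] at this
          exact this
    exact Subtype.ext (funext fun i => key i.1 i.2)
  have hcard : Nat.card {x : Fin n → Bool //
        (hammingDist x (fun i => x ⟨((i : ℕ) + k) % n, Nat.mod_lt _ i.pos⟩) : ℝ) < ε * n}
      ≤ 2 ^ k * (univ.filter P).card := by
    calc Nat.card {x : Fin n → Bool //
        (hammingDist x (fun i => x ⟨((i : ℕ) + k) % n, Nat.mod_lt _ i.pos⟩) : ℝ) < ε * n}
        ≤ Nat.card ((Fin k → Bool) × {t : Finset (Fin m) // P t}) :=
          Nat.card_le_card_of_injective f hinj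
      _ = 2 ^ k * (univ.filter P).card := by
          rw [Nat.card_prod, Nat.card_eq_fintype_card, Nat.card_eq_fintype_card,
            Fintype.card_subtype]
          simp
  have hcount : ((univ.filter P).card : ℝ) ≤ 2 ^ (binEntropy (2 * ε) * m) :=
    count_small_subsets (2 * ε) (by linarith) (by linarith) m
  calc (Nat.card {x : Fin n → Bool //
        (hammingDist x (fun i => x ⟨((i : ℕ) + k) % n, Nat.mod_lt _ i.pos⟩) : ℝ) < ε * n} : ℝ)
      ≤ ((2 ^ k * (univ.filter P).card : ℕ) : ℝ) := by exact_mod_cast hcard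
    _ = 2 ^ k * ((univ.filter P).card : ℝ) := by push_cast; ring
    _ ≤ 2 ^ k * 2 ^ (binEntropy (2 * ε) * m) := by
        apply mul_le_mul_of_nonneg_left hcount (by positivity)
    _ = 2 ^ k * 2 ^ (binEntropy (2 * ε) * ((n : ℝ) - k)) := by rw [hmn]
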